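/- arXiv:1312.3827 — 4 statements merged into one kernel-verified Lean document; each statement's English description precedes it below -/
import Mathlib

section
/- For a square-summable sequence φ: ℤ^d → ℂ and any index k with 0 ≤ k < d, sup over the (k+1)-th coordinate of the partial ℓ² norm over the first k coordinates satisfies sup_{ζ_{k+1}∈ℤ} [φ]_k ≤ [D_{k+1}φ]_{k+1}^{1/2} · [φ]_{k+1}^{1/2}, where [φ]_k := (∑_{ζ_1,…,ζ_k ∈ ℤ} |φ(ζ)|²)^{1/2}. -/
noncomputable section

/-- Partial difference operator in direction `i` on ℤ^d. -/
def Dop {d : ℕ} (i : Fin d) (φ : (Fin d → ℤ) → ℂ) : (Fin d → ℤ) → ℂ :=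
  fun ζ => φ (Function.update ζ i (ζ i + 1)) - φ ζ

/-- The ℓ²(ℤ^d) norm. -/
def l2 {d : ℕ} (φ : (Fin d → ℤ) → ℂ) : ℝ := Real.sqrt (∑' ζ : Fin d → ℤ, ‖φ ζ‖ ^ 2)

/-- The ℓ∞(ℤ^d) norm. -/
def lsup {d : ℕ} (φ : (Fin d → ℤ) → ℂ) : ℝ := ⨆ ζ : Fin d → ℤ, ‖φ ζ‖

/-- The ℓ²(ℤ^d) norm of the discrete gradient. -/
def gradn {d : ℕ} (φ : (Fin d → ℤ) → ℂ) : ℝ :=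
  Real.sqrt (∑ i : Fin d, ∑' ζ : Fin d → ℤ, ‖Dop i φ ζ‖ ^ 2)

/-- The partial ℓ² norm `[φ]_k` over the first `k` coordinates, as a function of the
remaining coordinates of `ζ`. -/
def pnorm {d : ℕ} (k : ℕ) (φ : (Fin d → ℤ) → ℂ) (ζ : Fin d → ℤ) : ℝ :=
  Real.sqrt (∑' w : Fin k → ℤ,
    ‖φ (fun i => if h : (i : ℕ) < k then w ⟨i, h⟩ else ζ i)‖ ^ 2)

open Filter

/-- Cauchy–Schwarz for tsums of nonnegative reals. -/
lemma cs_tsum {ι : Type*} {f g : ι → ℝ} (hf0 : ∀ i, 0 ≤ f i) (hg0 : ∀ i, 0 ≤ g i)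
    (hf : Summable fun i => f i ^ 2) (hg : Summable fun i => g i ^ 2) :
    Summable (fun i => f i * g i) ∧
      ∑' i, f i * g i ≤ Real.sqrt (∑' i, f i ^ 2) * Real.sqrt (∑' i, g i ^ 2) := by
  have hs : Summable fun i => f i * g i := by
    refine Summable.of_nonneg_of_le (fun i => mul_nonneg (hf0 i) (hg0 i))
      (fun i => ?_) ((hf.add hg).div_const 2)
    nlinarith [sq_nonneg (f i - g i)]
  refine ⟨hs, hs.tsum_le_of_sum_le fun s => ?_⟩
  have h1 : (∑ i ∈ s, f i * g i) ^ 2 ≤ (∑' i, f i ^ 2) * (∑' i, g i ^ 2) := by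
    refine (Finset.sum_mul_sq_le_sq_mul_sq s f g).trans ?_
    have := Summable.sum_le_tsum s (fun i _ => sq_nonneg (f i)) hf
    have := Summable.sum_le_tsum s (fun i _ => sq_nonneg (g i)) hg
    have h2 : (0:ℝ) ≤ ∑ i ∈ s, f i ^ 2 := Finset.sum_nonneg fun i _ => sq_nonneg _
    have h3 : (0:ℝ) ≤ ∑' i, g i ^ 2 := tsum_nonneg fun i => sq_nonneg _
    nlinarith
  have h4 : (0:ℝ) ≤ ∑ i ∈ s, f i * g i :=
    Finset.sum_nonneg fun i _ => mul_nonneg (hf0 i) (hg0 i)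
  have h5 : (0:ℝ) ≤ (∑' i, f i ^ 2) * (∑' i, g i ^ 2) :=
    mul_nonneg (tsum_nonneg fun i => sq_nonneg _) (tsum_nonneg fun i => sq_nonneg _)
  calc ∑ i ∈ s, f i * g i ≤ Real.sqrt ((∑' i, f i ^ 2) * (∑' i, g i ^ 2)) := by
        rw [Real.le_sqrt h4 h5]; exact h1
    _ = _ := Real.sqrt_mul (tsum_nonneg fun i => sq_nonneg _) _

lemma tele (f : ℤ → ℝ) (a : ℤ) (n : ℕ) :
    ∑ j ∈ Finset.range n, (f (a + j + 1) - f (a + j)) = f (a + n) - f a := by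
  induction n with
  | zero => simp
  | succ n ih =>
    rw [Finset.sum_range_succ, ih]
    push_cast
    ring_nf

/-- 1D telescoping estimate. -/
lemma oneD {g Δ : ℤ → ℝ} (hΔ0 : ∀ s, 0 ≤ Δ s)
    (hg : Summable g) (hΔ : Summable Δ)
    (hd : ∀ s, |g (s + 1) - g s| ≤ Δ s) (t : ℤ) : 2 * g t ≤ ∑' s, Δ s := by
  set Δ₁ : ℤ → ℝ := fun s => if s < t then Δ s else 0 with hΔ₁def
  set Δ₂ : ℤ → ℝ := fun s => if s < t then 0 else Δ s with hΔ₂def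
  have hΔ₁0 : ∀ s, 0 ≤ Δ₁ s := fun s => by by_cases h : s < t <;> simp [hΔ₁def, h, hΔ0 s]
  have hΔ₂0 : ∀ s, 0 ≤ Δ₂ s := fun s => by by_cases h : s < t <;> simp [hΔ₂def, h, hΔ0 s]
  have hΔ₁s : Summable Δ₁ := by
    refine Summable.of_nonneg_of_le hΔ₁0 (fun s => ?_) hΔ
    by_cases h : s < t <;> simp [hΔ₁def, h, hΔ0 s]
  have hΔ₂s : Summable Δ₂ := by
    refine Summable.of_nonneg_of_le hΔ₂0 (fun s => ?_) hΔ
    by_cases h : s < t <;> simp [hΔ₂def, h, hΔ0 s]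
  have hsplit : ∑' s, Δ₁ s + ∑' s, Δ₂ s = ∑' s, Δ s := by
    rw [← Summable.tsum_add hΔ₁s hΔ₂s]
    refine tsum_congr fun s => ?_
    by_cases h : s < t <;> simp [hΔ₁def, hΔ₂def, h]
  have hA : ∀ n : ℕ, g t - g (t - n) ≤ ∑' s, Δ₁ s := by
    intro n
    have ht : g t - g (t - n) = ∑ j ∈ Finset.range n, (g (t - n + j + 1) - g (t - n + j)) := by
      rw [tele g (t - n) n]; ring_nf
    rw [ht]
    have hb : ∑ j ∈ Finset.range n, (g (t - n + j + 1) - g (t - n + j))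
        ≤ ∑ j ∈ Finset.range n, Δ₁ (t - n + j) := by
      refine Finset.sum_le_sum fun j hj => ?_
      have hjn : (j : ℤ) < n := by exact_mod_cast Finset.mem_range.mp hj
      have hlt : t - n + j < t := by omega
      have : Δ₁ (t - n + j) = Δ (t - n + j) := by simp [hΔ₁def, hlt]
      rw [this]
      exact (le_abs_self _).trans (hd _)
    refine hb.trans ?_
    have : ∑ j ∈ Finset.range n, Δ₁ (t - n + j)
        = ∑ s ∈ (Finset.range n).image (fun j : ℕ => t - n + j), Δ₁ s := by
      rw [Finset.sum_image]
      intro x _ y _ hxy; simp only at hxy; omega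
    rw [this]
    exact Summable.sum_le_tsum _ (fun s _ => hΔ₁0 s) hΔ₁s
  have hB : ∀ n : ℕ, g t - g (t + n) ≤ ∑' s, Δ₂ s := by
    intro n
    have ht : g t - g (t + n) = ∑ j ∈ Finset.range n, (g (t + j) - g (t + j + 1)) := by
      have h2 : ∑ j ∈ Finset.range n, (g (t + j) - g (t + j + 1))
          = -(∑ j ∈ Finset.range n, (g (t + j + 1) - g (t + j))) := by
        rw [← Finset.sum_neg_distrib]
        exact Finset.sum_congr rfl fun j _ => by ring
      rw [h2, tele g t n]; ring
    rw [ht]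
    have hb : ∑ j ∈ Finset.range n, (g (t + j) - g (t + j + 1))
        ≤ ∑ j ∈ Finset.range n, Δ₂ (t + j) := by
      refine Finset.sum_le_sum fun j hj => ?_
      have hlt : ¬ t + j < t := by omega
      have hΔe : Δ₂ (t + j) = Δ (t + j) := by simp [hΔ₂def, hlt]
      rw [hΔe]
      calc g (t + j) - g (t + j + 1) ≤ |g (t + j + 1) - g (t + j)| := by
            rw [abs_sub_comm]; exact le_abs_self _
        _ ≤ Δ (t + j) := hd _
    refine hb.trans ?_
    have : ∑ j ∈ Finset.range n, Δ₂ (t + j)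
        = ∑ s ∈ (Finset.range n).image (fun j : ℕ => t + j), Δ₂ s := by
      rw [Finset.sum_image]
      intro x _ y _ hxy; simp only at hxy; omega
    rw [this]
    exact Summable.sum_le_tsum _ (fun s _ => hΔ₂0 s) hΔ₂s
  -- limits
  have hc : Tendsto g cofinite (nhds 0) := hg.tendsto_cofinite_zero
  have hinj1 : Function.Injective (fun n : ℕ => t - (n : ℤ)) := fun a b hab => by
    simp only at hab; omega
  have hinj2 : Function.Injective (fun n : ℕ => t + (n : ℤ)) := fun a b hab => by
    simp only at hab; omega
  have h1 : Tendsto (fun n : ℕ => g (t - n)) atTop (nhds 0) := by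
    refine hc.comp ?_
    rw [← Nat.cofinite_eq_atTop]
    exact hinj1.tendsto_cofinite
  have h2 : Tendsto (fun n : ℕ => g (t + n)) atTop (nhds 0) := by
    refine hc.comp ?_
    rw [← Nat.cofinite_eq_atTop]
    exact hinj2.tendsto_cofinite
  have h3 : Tendsto (fun n : ℕ => g (t - n) + g (t + n) + (∑' s, Δ₁ s + ∑' s, Δ₂ s))
      atTop (nhds (0 + 0 + (∑' s, Δ₁ s + ∑' s, Δ₂ s))) :=
    ((h1.add h2).add tendsto_const_nhds)
  have h4 : 2 * g t ≤ 0 + 0 + (∑' s, Δ₁ s + ∑' s, Δ₂ s) := by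
    refine ge_of_tendsto h3 (Eventually.of_forall fun n => ?_)
    have := hA n
    have := hB n
    linarith
  rw [← hsplit]
  linarith


lemma abs_tsum_le' {ι : Type*} (f : ι → ℝ) (hf : Summable fun i => |f i|) :
    |∑' i, f i| ≤ ∑' i, |f i| := by
  simpa using norm_tsum_le_tsum_norm (f := f) (by simpa using hf)


set_option maxHeartbeats 1000000 in
/-- The Agmon–Cauchy inequality on ℤ^d. -/
theorem agmon_cauchy {d : ℕ} (φ : (Fin d → ℤ) → ℂ)
    (h : Summable fun ζ : Fin d → ℤ => ‖φ ζ‖ ^ 2) (k : ℕ) (hk : k < d) (ζ : Fin d → ℤ) :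
    (⨆ t : ℤ, pnorm k φ (Function.update ζ ⟨k, hk⟩ t)) ≤
      Real.sqrt (pnorm (k + 1) (Dop ⟨k, hk⟩ φ) ζ) * Real.sqrt (pnorm (k + 1) φ ζ) := by
  set i0 : Fin d := ⟨k, hk⟩ with hi0
  set Q : ℤ × (Fin k → ℤ) → (Fin d → ℤ) := fun q => fun i : Fin d =>
    if h' : (i : ℕ) < k then q.2 ⟨i, h'⟩ else if (i : ℕ) = k then q.1 else ζ i with hQdef
  have hQat : ∀ q, Q q i0 = q.1 := by
    intro q
    simp [hQdef, hi0]
  have hQinj : Function.Injective Q := by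
    intro q q' he
    have h1 : q.1 = q'.1 := by
      have := congrFun he i0
      rwa [hQat, hQat] at this
    have h2 : q.2 = q'.2 := by
      funext j
      have hjd : (j : ℕ) < d := lt_trans j.2 hk
      have := congrFun he ⟨j.1, hjd⟩
      simp only [hQdef, dif_pos (show ((⟨j.1, hjd⟩ : Fin d) : ℕ) < k from j.2)] at this
      simpa using this
    exact Prod.ext h1 h2
  have HQ : Summable fun q => ‖φ (Q q)‖ ^ 2 := h.comp_injective hQinj
  have hshift : ∀ q : ℤ × (Fin k → ℤ),
      Function.update (Q q) i0 (Q q i0 + 1) = Q (q.1 + 1, q.2) := by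
    intro q
    funext i
    rcases eq_or_ne i i0 with rfl | hne
    · rw [Function.update_self, hQat, hQat]
    · rw [Function.update_of_ne hne]
      have hik : (i : ℕ) ≠ k := fun hc => hne (Fin.ext hc)
      by_cases h' : (i : ℕ) < k <;> simp [hQdef, h', hik]
  have hDQ : ∀ q : ℤ × (Fin k → ℤ),
      Dop i0 φ (Q q) = φ (Q (q.1 + 1, q.2)) - φ (Q q) := by
    intro q
    rw [Dop, hshift q]
  have HQ' : Summable fun q : ℤ × (Fin k → ℤ) => ‖φ (Q (q.1 + 1, q.2))‖ ^ 2 := by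
    have := ((Equiv.prodCongr (Equiv.addRight (1 : ℤ)) (Equiv.refl (Fin k → ℤ))).summable_iff
      (f := fun q : ℤ × (Fin k → ℤ) => ‖φ (Q q)‖ ^ 2)).2 HQ
    exact this
  have HD : Summable fun q => ‖Dop i0 φ (Q q)‖ ^ 2 := by
    refine Summable.of_nonneg_of_le (fun q => sq_nonneg _) (fun q => ?_)
      ((HQ'.mul_left 2).add (HQ.mul_left 2))
    rw [hDQ q]
    have h1 := norm_sub_le (φ (Q (q.1 + 1, q.2))) (φ (Q q))
    have h2 := norm_nonneg (φ (Q (q.1 + 1, q.2)))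
    have h3 := norm_nonneg (φ (Q q))
    have h4 := norm_nonneg (φ (Q (q.1 + 1, q.2)) - φ (Q q))
    have h5 : ‖φ (Q (q.1 + 1, q.2)) - φ (Q q)‖ ^ 2
        ≤ (‖φ (Q (q.1 + 1, q.2))‖ + ‖φ (Q q)‖) ^ 2 := pow_le_pow_left₀ h4 h1 2
    nlinarith [sq_nonneg (‖φ (Q (q.1 + 1, q.2))‖ - ‖φ (Q q)‖)]
  set g : ℤ → ℝ := fun t => ∑' w : Fin k → ℤ, ‖φ (Q (t, w))‖ ^ 2 with hgdef
  set D : ℤ → ℝ := fun t => Real.sqrt (∑' w : Fin k → ℤ, ‖Dop i0 φ (Q (t, w))‖ ^ 2) with hDdef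
  set a : ℤ → ℝ := fun t => Real.sqrt (g t) with hadef
  have hg0 : ∀ t, 0 ≤ g t := fun t => tsum_nonneg fun w => sq_nonneg _
  have hD0 : ∀ t, 0 ≤ D t := fun t => Real.sqrt_nonneg _
  have ha0 : ∀ t, 0 ≤ a t := fun t => Real.sqrt_nonneg _
  have ha2 : ∀ t, a t ^ 2 = g t := fun t => Real.sq_sqrt (hg0 t)
  have hD2 : ∀ t, D t ^ 2 = ∑' w : Fin k → ℤ, ‖Dop i0 φ (Q (t, w))‖ ^ 2 := fun t =>
    Real.sq_sqrt (tsum_nonneg fun w => sq_nonneg _)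
  have hgsum : Summable g :=
    ((summable_prod_of_nonneg (fun q => sq_nonneg _)).1 HQ).2
  have hD2sum : Summable fun t => D t ^ 2 := by
    have := ((summable_prod_of_nonneg (fun q : ℤ × (Fin k → ℤ) => sq_nonneg ‖Dop i0 φ (Q q)‖)).1
      HD).2
    exact this.congr fun t => (hD2 t).symm
  have hgsum' : Summable fun t => g (t + 1) :=
    ((Equiv.addRight (1 : ℤ)).summable_iff (f := g)).2 hgsum
  have ha2sum : Summable fun t => a t ^ 2 := hgsum.congr fun t => (ha2 t).symm
  have ha2sum' : Summable fun t => a (t + 1) ^ 2 := hgsum'.congr fun t => (ha2 (t + 1)).symm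
  -- pointwise step bound
  have hstep : ∀ s : ℤ, |g (s + 1) - g s| ≤ D s * a (s + 1) + D s * a s := by
    intro s
    have hA2 : Summable fun w => ‖φ (Q (s + 1, w))‖ ^ 2 := HQ.prod_factor (s + 1)
    have hB2 : Summable fun w => ‖φ (Q (s, w))‖ ^ 2 := HQ.prod_factor s
    have hN2 : Summable fun w => ‖Dop i0 φ (Q (s, w))‖ ^ 2 := HD.prod_factor s
    have csA := cs_tsum (f := fun w => ‖Dop i0 φ (Q (s, w))‖)
      (g := fun w => ‖φ (Q (s + 1, w))‖) (fun w => norm_nonneg _) (fun w => norm_nonneg _)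
      hN2 hA2
    have csB := cs_tsum (f := fun w => ‖Dop i0 φ (Q (s, w))‖)
      (g := fun w => ‖φ (Q (s, w))‖) (fun w => norm_nonneg _) (fun w => norm_nonneg _)
      hN2 hB2
    have hptw : ∀ w : Fin k → ℤ, |‖φ (Q (s + 1, w))‖ ^ 2 - ‖φ (Q (s, w))‖ ^ 2|
        ≤ ‖Dop i0 φ (Q (s, w))‖ * ‖φ (Q (s + 1, w))‖
          + ‖Dop i0 φ (Q (s, w))‖ * ‖φ (Q (s, w))‖ := by
      intro w
      set x := ‖φ (Q (s + 1, w))‖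
      set y := ‖φ (Q (s, w))‖
      have key : |x - y| ≤ ‖Dop i0 φ (Q (s, w))‖ := by
        rw [hDQ (s, w)]
        exact abs_norm_sub_norm_le _ _
      have hx : 0 ≤ x := norm_nonneg _
      have hy : 0 ≤ y := norm_nonneg _
      have e1 : |x ^ 2 - y ^ 2| = |x - y| * (x + y) := by
        rw [show x ^ 2 - y ^ 2 = (x - y) * (x + y) by ring, abs_mul,
          abs_of_nonneg (add_nonneg hx hy)]
      rw [e1]
      calc |x - y| * (x + y) ≤ ‖Dop i0 φ (Q (s, w))‖ * (x + y) :=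
            mul_le_mul_of_nonneg_right key (add_nonneg hx hy)
        _ = _ := by ring
    have habs_sum : Summable fun w => |‖φ (Q (s + 1, w))‖ ^ 2 - ‖φ (Q (s, w))‖ ^ 2| :=
      Summable.of_nonneg_of_le (fun w => abs_nonneg _) hptw (csA.1.add csB.1)
    have hdiff : g (s + 1) - g s
        = ∑' w : Fin k → ℤ, (‖φ (Q (s + 1, w))‖ ^ 2 - ‖φ (Q (s, w))‖ ^ 2) :=
      (Summable.tsum_sub hA2 hB2).symm
    rw [hdiff]
    calc |∑' w : Fin k → ℤ, (‖φ (Q (s + 1, w))‖ ^ 2 - ‖φ (Q (s, w))‖ ^ 2)|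
        ≤ ∑' w : Fin k → ℤ, |‖φ (Q (s + 1, w))‖ ^ 2 - ‖φ (Q (s, w))‖ ^ 2| := by
          exact abs_tsum_le' _ habs_sum
      _ ≤ ∑' w : Fin k → ℤ, (‖Dop i0 φ (Q (s, w))‖ * ‖φ (Q (s + 1, w))‖
          + ‖Dop i0 φ (Q (s, w))‖ * ‖φ (Q (s, w))‖) :=
          Summable.tsum_le_tsum hptw habs_sum (csA.1.add csB.1)
      _ = (∑' w : Fin k → ℤ, ‖Dop i0 φ (Q (s, w))‖ * ‖φ (Q (s + 1, w))‖)
          + ∑' w : Fin k → ℤ, ‖Dop i0 φ (Q (s, w))‖ * ‖φ (Q (s, w))‖ :=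
          Summable.tsum_add csA.1 csB.1
      _ ≤ D s * a (s + 1) + D s * a s := by
          refine add_le_add (csA.2.trans_eq ?_) (csB.2.trans_eq ?_) <;> rw [hDdef, hadef]
  -- summability of the step bound
  have csD1 := cs_tsum (f := D) (g := fun s => a (s + 1)) hD0 (fun s => ha0 _) hD2sum ha2sum'
  have csD2 := cs_tsum (f := D) (g := a) hD0 ha0 hD2sum ha2sum
  have hΔsum : Summable fun s => D s * a (s + 1) + D s * a s := csD1.1.add csD2.1
  set SD : ℝ := ∑' q : ℤ × (Fin k → ℤ), ‖Dop i0 φ (Q q)‖ ^ 2 with hSDdef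
  set SP : ℝ := ∑' q : ℤ × (Fin k → ℤ), ‖φ (Q q)‖ ^ 2 with hSPdef
  have hSD : ∑' s, D s ^ 2 = SD := by
    rw [hSDdef, Summable.tsum_prod' HD (fun b => HD.prod_factor b)]
    exact tsum_congr fun s => hD2 s
  have hSP : ∑' s, a s ^ 2 = SP := by
    rw [hSPdef, Summable.tsum_prod' HQ (fun b => HQ.prod_factor b)]
    exact tsum_congr fun s => ha2 s
  have hSP' : ∑' s, a (s + 1) ^ 2 = SP := by
    rw [← hSP]
    exact (Equiv.addRight (1 : ℤ)).tsum_eq fun s => a s ^ 2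
  have hmain : ∀ t : ℤ, g t ≤ Real.sqrt SD * Real.sqrt SP := by
    intro t
    have h1 := oneD (g := g) (Δ := fun s => D s * a (s + 1) + D s * a s)
      (fun s => add_nonneg (mul_nonneg (hD0 s) (ha0 _)) (mul_nonneg (hD0 s) (ha0 s)))
      hgsum hΔsum hstep t
    have h2 : ∑' s, (D s * a (s + 1) + D s * a s) ≤ 2 * (Real.sqrt SD * Real.sqrt SP) := by
      rw [Summable.tsum_add csD1.1 csD2.1]
      have b1 := csD1.2
      have b2 := csD2.2
      beta_reduce at b1 b2
      rw [hSD, hSP'] at b1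
      rw [hSD, hSP] at b2
      have e1 : ∑' (b : ℤ), D b * (fun s => a (s + 1)) b = ∑' (b : ℤ), D b * a (b + 1) := rfl
      rw [e1]
      linarith
    linarith
  -- identify pnorm with g / SD / SP
  have hgt : ∀ t : ℤ, pnorm k φ (Function.update ζ i0 t) = Real.sqrt (g t) := by
    intro t
    rw [pnorm, hgdef]
    congr 1
    refine tsum_congr fun w => ?_
    have hfun : (fun i : Fin d => if h' : (i : ℕ) < k then w ⟨i, h'⟩
        else Function.update ζ i0 t i) = Q (t, w) := by
      funext i
      by_cases h' : (i : ℕ) < k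
      · simp [hQdef, h']
      · have hik : (i = i0) ↔ ((i : ℕ) = k) := ⟨fun hc => by rw [hc], fun hc => Fin.ext hc⟩
        by_cases h'' : (i : ℕ) = k
        · simp [hQdef, h', h'', Function.update_apply, hik.2 h'', hi0]
        · have : i ≠ i0 := fun hc => h'' (by rw [hc])
          simp [hQdef, h', h'', Function.update_apply, this]
    rw [hfun]
  set e : ℤ × (Fin k → ℤ) ≃ (Fin (k + 1) → ℤ) := Fin.insertNthEquiv (fun _ => ℤ) (Fin.last k)
    with hedef
  have hpt : ∀ (q : ℤ × (Fin k → ℤ)),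
      (fun i : Fin d => if h' : (i : ℕ) < k + 1 then (e q) ⟨i, h'⟩ else ζ i) = Q q := by
    intro q
    funext i
    by_cases h1 : (i : ℕ) < k
    · have h2 : (i : ℕ) < k + 1 := by omega
      rw [dif_pos h2]
      have h3 : (⟨(i : ℕ), h2⟩ : Fin (k + 1)) = (Fin.last k).succAbove ⟨(i : ℕ), h1⟩ := by
        simp [Fin.succAbove_last]
      rw [hedef]
      simp only [Fin.insertNthEquiv_apply]
      rw [h3, Fin.insertNth_apply_succAbove]
      simp [hQdef, h1]
    · by_cases h2 : (i : ℕ) = k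
      · have h3 : (i : ℕ) < k + 1 := by omega
        rw [dif_pos h3]
        have h4 : (⟨(i : ℕ), h3⟩ : Fin (k + 1)) = Fin.last k := by
          ext; simpa using h2
        rw [hedef]
        simp only [Fin.insertNthEquiv_apply]
        rw [h4, Fin.insertNth_apply_same]
        simp [hQdef, h1, h2]
      · have h3 : ¬ (i : ℕ) < k + 1 := by omega
        rw [dif_neg h3]
        simp [hQdef, h1, h2]
  have hpnorm_eq : ∀ ψ : (Fin d → ℤ) → ℂ,
      pnorm (k + 1) ψ ζ = Real.sqrt (∑' q : ℤ × (Fin k → ℤ), ‖ψ (Q q)‖ ^ 2) := by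
    intro ψ
    rw [pnorm]
    congr 1
    rw [← e.tsum_eq (fun W : Fin (k + 1) → ℤ =>
      ‖ψ (fun i : Fin d => if h' : (i : ℕ) < k + 1 then W ⟨i, h'⟩ else ζ i)‖ ^ 2)]
    exact tsum_congr fun q => by rw [hpt q]
  have hND : pnorm (k + 1) (Dop i0 φ) ζ = Real.sqrt SD := by rw [hpnorm_eq, hSDdef]
  have hNP : pnorm (k + 1) φ ζ = Real.sqrt SP := by rw [hpnorm_eq, hSPdef]
  rw [hND, hNP]
  refine ciSup_le fun t => ?_
  rw [hgt t, ← Real.sqrt_mul (Real.sqrt_nonneg SD) (Real.sqrt SP)]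
  exact Real.sqrt_le_sqrt (hmain t)
end
end

section
/- For a square-summable sequence φ: ℤ^d → ℂ, any fixed index j ∈ {1,…,d}, and any p ∈ {1,…,2^{d−1}}, we have ‖φ‖_{ℓ∞(ℤ^d)}^{2^d} ≤ 2^{d·2^{d−1}−p} · ‖D_j φ‖_{ℓ²(ℤ^d)}^p · ‖φ‖_{ℓ²(ℤ^d)}^{2^d−p}. -/
noncomputable section

open Filter Topology

/-- Cauchy–Schwarz for tsums over ℤ. -/
lemma tsum_cs (f g : ℤ → ℝ) (hf : ∀ t, 0 ≤ f t) (hg : ∀ t, 0 ≤ g t)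
    (hf2 : Summable fun t => f t ^ 2) (hg2 : Summable fun t => g t ^ 2) :
    ∑' t, f t * g t ≤ Real.sqrt (∑' t, f t ^ 2) * Real.sqrt (∑' t, g t ^ 2) := by
  have hfg : Summable fun t => f t * g t := by
    refine Summable.of_nonneg_of_le (fun t => mul_nonneg (hf t) (hg t)) (fun t => ?_)
      ((hf2.add hg2).mul_left (1/2))
    nlinarith [sq_nonneg (f t - g t)]
  refine Summable.tsum_le_of_sum_le hfg fun s => ?_
  calc ∑ t ∈ s, f t * g t
      ≤ Real.sqrt (∑ t ∈ s, f t ^ 2) * Real.sqrt (∑ t ∈ s, g t ^ 2) := by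
        rw [← Real.sqrt_sq (Finset.sum_nonneg fun t _ => mul_nonneg (hf t) (hg t)),
          ← Real.sqrt_mul (Finset.sum_nonneg fun t _ => sq_nonneg _)]
        exact Real.sqrt_le_sqrt (Finset.sum_mul_sq_le_sq_mul_sq s f g)
    _ ≤ Real.sqrt (∑' t, f t ^ 2) * Real.sqrt (∑' t, g t ^ 2) := by
        apply mul_le_mul (Real.sqrt_le_sqrt (Summable.sum_le_tsum s (fun t _ => sq_nonneg _) hf2))
          (Real.sqrt_le_sqrt (Summable.sum_le_tsum s (fun t _ => sq_nonneg _) hg2))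
          (Real.sqrt_nonneg _) (Real.sqrt_nonneg _)

/-- Two-sided telescoping bound. -/
lemma telescope (u : ℤ → ℝ) (hu : ∀ t, 0 ≤ u t) (hsum : Summable u)
    (v : ℤ → ℝ) (hv0 : ∀ t, 0 ≤ v t) (hv : ∀ t, |u (t + 1) - u t| ≤ v t)
    (hvs : Summable v) (n : ℤ) : 2 * u n ≤ ∑' t, v t := by
  have htend : Tendsto u cofinite (𝓝 0) := hsum.tendsto_cofinite_zero
  have hinjp : Function.Injective (fun k : ℕ => n + (k : ℤ)) := by
    intro a b hab; simpa using hab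
  have hinjm : Function.Injective (fun k : ℕ => n - 1 - (k : ℤ)) := by
    intro a b hab; simp only at hab; omega
  have hsvp : Summable fun k : ℕ => v (n + k) := hvs.comp_injective hinjp
  have hsvm : Summable fun k : ℕ => v (n - 1 - k) := hvs.comp_injective hinjm
  have hup : u n ≤ ∑' k : ℕ, v (n + k) := by
    have key : ∀ K : ℕ, u n ≤ u (n + K) + ∑ k ∈ Finset.range K, v (n + k) := by
      intro K
      induction K with
      | zero => simp
      | succ K ih =>
        have h1 := hv (n + K)
        have h2 := abs_le.mp h1
        have heq : (n + (K : ℤ)) + 1 = n + ((K : ℕ) + 1 : ℕ) := by push_cast; ring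
        rw [Finset.sum_range_succ]
        rw [heq] at h2
        linarith [ih, h2.2]
    have hlim1 : Tendsto (fun K : ℕ => u (n + K)) atTop (𝓝 0) := by
      have := htend.comp hinjp.tendsto_cofinite
      rwa [Nat.cofinite_eq_atTop] at this
    have hlim2 : Tendsto (fun K : ℕ => ∑ k ∈ Finset.range K, v (n + k)) atTop
        (𝓝 (∑' k : ℕ, v (n + k))) := hsvp.hasSum.tendsto_sum_nat
    have hl := hlim1.add hlim2
    rw [zero_add] at hl
    exact ge_of_tendsto hl (Eventually.of_forall key)
  have hdown : u n ≤ ∑' k : ℕ, v (n - 1 - k) := by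
    have key : ∀ K : ℕ, u n ≤ u (n - K) + ∑ k ∈ Finset.range K, v (n - 1 - k) := by
      intro K
      induction K with
      | zero => simp
      | succ K ih =>
        have h1 := hv (n - 1 - K)
        have h2 := abs_le.mp h1
        have heq : (n - 1 - (K : ℤ)) + 1 = n - (K : ℤ) := by ring
        have heq2 : n - ((K : ℕ) + 1 : ℕ) = n - 1 - (K : ℤ) := by push_cast; ring
        rw [Finset.sum_range_succ, heq2]
        rw [heq] at h2
        linarith [ih, h2.1]
    have hlim1 : Tendsto (fun K : ℕ => u (n - K)) atTop (𝓝 0) := by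
      have hinj : Function.Injective (fun k : ℕ => n - (k : ℤ)) := by
        intro a b hab; simp only at hab; omega
      have := htend.comp hinj.tendsto_cofinite
      rwa [Nat.cofinite_eq_atTop] at this
    have hlim2 : Tendsto (fun K : ℕ => ∑ k ∈ Finset.range K, v (n - 1 - k)) atTop
        (𝓝 (∑' k : ℕ, v (n - 1 - k))) := hsvm.hasSum.tendsto_sum_nat
    have hl := hlim1.add hlim2
    rw [zero_add] at hl
    exact ge_of_tendsto hl (Eventually.of_forall key)
  have hsplit : (∑' x : Set.Ici n, v x) + ∑' x : ↑(Set.Ici n)ᶜ, v x = ∑' t, v t :=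
    Summable.tsum_subtype_add_tsum_subtype_compl hvs (Set.Ici n)
  have hlep : ∑' k : ℕ, v (n + k) ≤ ∑' x : Set.Ici n, v x := by
    exact Summable.tsum_le_tsum_of_inj (fun k : ℕ => (⟨n + k, by simp⟩ : Set.Ici n))
      (fun a b hab => hinjp (congrArg Subtype.val hab))
      (fun c _ => hv0 c) (fun k => le_rfl) hsvp (hvs.subtype _)
  have hlem : ∑' k : ℕ, v (n - 1 - k) ≤ ∑' x : ↑(Set.Ici n)ᶜ, v x := by
    exact Summable.tsum_le_tsum_of_inj
      (fun k : ℕ => (⟨n - 1 - k, by simp only [Set.mem_compl_iff, Set.mem_Ici, not_le]; omega⟩ :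
        ↑(Set.Ici n)ᶜ))
      (fun a b hab => hinjm (congrArg Subtype.val hab))
      (fun c _ => hv0 c) (fun k => le_rfl) hsvm (hvs.subtype _)
  linarith

/-- One-dimensional Agmon inequality on ℤ. -/
lemma oneD_s8 (ψ : ℤ → ℂ) (h2 : Summable fun t => ‖ψ t‖ ^ 2)
    (hD : Summable fun t => ‖ψ (t + 1) - ψ t‖ ^ 2) (n : ℤ) :
    ‖ψ n‖ ^ 2 ≤ Real.sqrt (∑' t, ‖ψ (t + 1) - ψ t‖ ^ 2) * Real.sqrt (∑' t, ‖ψ t‖ ^ 2) := by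
  have hshift : Summable fun t : ℤ => ‖ψ (t + 1)‖ ^ 2 :=
    h2.comp_injective (add_left_injective 1)
  have hg2 : Summable fun t : ℤ => (‖ψ (t + 1)‖ + ‖ψ t‖) ^ 2 := by
    refine Summable.of_nonneg_of_le (fun t => sq_nonneg _) (fun t => ?_)
      ((hshift.add h2).mul_left 2)
    nlinarith [sq_nonneg (‖ψ (t + 1)‖ - ‖ψ t‖)]
  have hpt : ∀ t : ℤ, |‖ψ (t + 1)‖ ^ 2 - ‖ψ t‖ ^ 2|
      ≤ ‖ψ (t + 1) - ψ t‖ * (‖ψ (t + 1)‖ + ‖ψ t‖) := by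
    intro t
    have h1 : |‖ψ (t + 1)‖ - ‖ψ t‖| ≤ ‖ψ (t + 1) - ψ t‖ := abs_norm_sub_norm_le _ _
    have h2' : |‖ψ (t + 1)‖ ^ 2 - ‖ψ t‖ ^ 2|
        = |‖ψ (t + 1)‖ - ‖ψ t‖| * (‖ψ (t + 1)‖ + ‖ψ t‖) := by
      rw [sq_sub_sq, abs_mul, abs_of_nonneg (by positivity), mul_comm]
    rw [h2']
    exact mul_le_mul_of_nonneg_right h1 (by positivity)
  have hwg : Summable fun t : ℤ => ‖ψ (t + 1) - ψ t‖ * (‖ψ (t + 1)‖ + ‖ψ t‖) := by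
    refine Summable.of_nonneg_of_le (fun t => mul_nonneg (norm_nonneg _) (by positivity))
      (fun t => ?_) ((hD.add hg2).mul_left (1/2))
    nlinarith [sq_nonneg (‖ψ (t + 1) - ψ t‖ - (‖ψ (t + 1)‖ + ‖ψ t‖))]
  have htel := telescope (fun t => ‖ψ t‖ ^ 2) (fun t => sq_nonneg _) h2
    (fun t => ‖ψ (t + 1) - ψ t‖ * (‖ψ (t + 1)‖ + ‖ψ t‖))
    (fun t => mul_nonneg (norm_nonneg _) (by positivity)) hpt hwg n
  have hcs := tsum_cs (fun t => ‖ψ (t + 1) - ψ t‖) (fun t => ‖ψ (t + 1)‖ + ‖ψ t‖)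
    (fun t => norm_nonneg _) (fun t => by positivity) hD hg2
  have hts : ∑' t : ℤ, ‖ψ (t + 1)‖ ^ 2 ≤ ∑' t : ℤ, ‖ψ t‖ ^ 2 :=
    Summable.tsum_le_tsum_of_inj (fun t : ℤ => t + 1) (add_left_injective 1)
      (fun c _ => sq_nonneg _) (fun t => le_rfl) hshift h2
  have hgu : ∑' t : ℤ, (‖ψ (t + 1)‖ + ‖ψ t‖) ^ 2 ≤ 4 * ∑' t : ℤ, ‖ψ t‖ ^ 2 := by
    have hstep : ∑' t : ℤ, (‖ψ (t + 1)‖ + ‖ψ t‖) ^ 2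
        ≤ ∑' t : ℤ, (2 * (‖ψ (t + 1)‖ ^ 2 + ‖ψ t‖ ^ 2)) := by
      refine Summable.tsum_le_tsum (fun t => ?_) hg2 ((hshift.add h2).mul_left 2)
      nlinarith [sq_nonneg (‖ψ (t + 1)‖ - ‖ψ t‖)]
    have heq : ∑' t : ℤ, (2 * (‖ψ (t + 1)‖ ^ 2 + ‖ψ t‖ ^ 2))
        = 2 * (∑' t : ℤ, ‖ψ (t + 1)‖ ^ 2 + ∑' t : ℤ, ‖ψ t‖ ^ 2) := by
      rw [tsum_mul_left, Summable.tsum_add hshift h2]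
    linarith
  have hsg : Real.sqrt (∑' t : ℤ, (‖ψ (t + 1)‖ + ‖ψ t‖) ^ 2)
      ≤ 2 * Real.sqrt (∑' t : ℤ, ‖ψ t‖ ^ 2) := by
    have h4 : Real.sqrt (4 * ∑' t : ℤ, ‖ψ t‖ ^ 2) = 2 * Real.sqrt (∑' t : ℤ, ‖ψ t‖ ^ 2) := by
      rw [show (4 : ℝ) * ∑' t : ℤ, ‖ψ t‖ ^ 2 = (2 : ℝ) ^ 2 * ∑' t : ℤ, ‖ψ t‖ ^ 2 by norm_num,
        Real.sqrt_mul (by positivity), Real.sqrt_sq (by norm_num)]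
    calc Real.sqrt (∑' t : ℤ, (‖ψ (t + 1)‖ + ‖ψ t‖) ^ 2)
        ≤ Real.sqrt (4 * ∑' t : ℤ, ‖ψ t‖ ^ 2) := Real.sqrt_le_sqrt hgu
      _ = 2 * Real.sqrt (∑' t : ℤ, ‖ψ t‖ ^ 2) := h4
  have hw0 : 0 ≤ Real.sqrt (∑' t, ‖ψ (t + 1) - ψ t‖ ^ 2) := Real.sqrt_nonneg _
  have hfin : 2 * ‖ψ n‖ ^ 2 ≤ Real.sqrt (∑' t, ‖ψ (t + 1) - ψ t‖ ^ 2)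
      * (2 * Real.sqrt (∑' t, ‖ψ t‖ ^ 2)) :=
    le_trans htel (le_trans hcs (mul_le_mul_of_nonneg_left hsg hw0))
  linarith

/-- Single-direction Agmon–Kolmogorov estimate on ℤ^d. -/
theorem agmon_single_direction {d : ℕ} (hd : 1 ≤ d) (φ : (Fin d → ℤ) → ℂ)
    (h : Summable fun ζ : Fin d → ℤ => ‖φ ζ‖ ^ 2) (j : Fin d) (p : ℕ)
    (hp1 : 1 ≤ p) (hp2 : p ≤ 2 ^ (d - 1)) :
    lsup φ ^ (2 ^ d) ≤
      2 ^ (d * 2 ^ (d - 1) - p) * l2 (Dop j φ) ^ p * l2 φ ^ (2 ^ d - p) := by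
  set A := l2 (Dop j φ) with hA
  set B := l2 φ with hB
  have hA0 : 0 ≤ A := Real.sqrt_nonneg _
  have hB0 : 0 ≤ B := Real.sqrt_nonneg _
  -- the shift map in direction j
  have hsinj : Function.Injective (fun ζ : Fin d → ℤ => Function.update ζ j (ζ j + 1)) := by
    intro a b hab
    simp only at hab
    funext i
    by_cases hi : i = j
    · subst hi
      have hj := congrFun hab i
      simpa using hj
    · have hi' := congrFun hab i
      simpa [Function.update_of_ne hi] using hi'
  have hshift : Summable fun ζ => ‖φ (Function.update ζ j (ζ j + 1))‖ ^ 2 :=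
    h.comp_injective hsinj
  have hDop : Summable fun ζ => ‖Dop j φ ζ‖ ^ 2 := by
    refine Summable.of_nonneg_of_le (fun ζ => sq_nonneg _) (fun ζ => ?_)
      ((hshift.add h).mul_left 2)
    simp only [Dop]
    have h1 : ‖φ (Function.update ζ j (ζ j + 1)) - φ ζ‖ ≤
        ‖φ (Function.update ζ j (ζ j + 1))‖ + ‖φ ζ‖ := norm_sub_le _ _
    nlinarith [norm_nonneg (φ (Function.update ζ j (ζ j + 1)) - φ ζ),
      sq_nonneg (‖φ (Function.update ζ j (ζ j + 1))‖ - ‖φ ζ‖)]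
  -- pointwise estimate
  have pointwise : ∀ ζ₀ : Fin d → ℤ, ‖φ ζ₀‖ ^ 2 ≤ A * B := by
    intro ζ₀
    set ι : ℤ → (Fin d → ℤ) := fun t => Function.update ζ₀ j t with hι
    have hιinj : Function.Injective ι := by
      intro a b hab
      have := congrFun hab j
      simpa [hι, Function.update_self] using this
    set ψ : ℤ → ℂ := fun t => φ (ι t) with hψ
    have h2ψ : Summable fun t => ‖ψ t‖ ^ 2 := h.comp_injective hιinj
    have hkey : ∀ t, ψ (t + 1) - ψ t = Dop j φ (ι t) := by
      intro t
      simp only [hψ, Dop, hι, Function.update_idem, Function.update_self]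
    have hDψ : Summable fun t => ‖ψ (t + 1) - ψ t‖ ^ 2 := by
      simp only [hkey]
      exact hDop.comp_injective hιinj
    have h1 := oneD_s8 ψ h2ψ hDψ (ζ₀ j)
    have hζ₀ : ψ (ζ₀ j) = φ ζ₀ := by
      simp only [hψ, hι, Function.update_eq_self]
    rw [hζ₀] at h1
    have hAle : Real.sqrt (∑' t, ‖ψ (t + 1) - ψ t‖ ^ 2) ≤ A := by
      apply Real.sqrt_le_sqrt
      exact Summable.tsum_le_tsum_of_inj ι hιinj (fun c _ => sq_nonneg _)
        (fun t => by rw [hkey t]) hDψ hDop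
    have hBle : Real.sqrt (∑' t, ‖ψ t‖ ^ 2) ≤ B := by
      apply Real.sqrt_le_sqrt
      exact Summable.tsum_le_tsum_of_inj ι hιinj (fun c _ => sq_nonneg _)
        (fun t => le_rfl) h2ψ h
    calc ‖φ ζ₀‖ ^ 2 ≤ Real.sqrt (∑' t, ‖ψ (t + 1) - ψ t‖ ^ 2) *
          Real.sqrt (∑' t, ‖ψ t‖ ^ 2) := h1
      _ ≤ A * B := mul_le_mul hAle hBle (Real.sqrt_nonneg _) hA0
  -- sup bounds
  have hLB : ∀ ζ, ‖φ ζ‖ ≤ B := by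
    intro ζ
    have h1 : ‖φ ζ‖ ^ 2 ≤ ∑' ζ', ‖φ ζ'‖ ^ 2 := Summable.le_tsum h ζ fun _ _ => sq_nonneg _
    calc ‖φ ζ‖ = Real.sqrt (‖φ ζ‖ ^ 2) := (Real.sqrt_sq (norm_nonneg _)).symm
      _ ≤ B := Real.sqrt_le_sqrt h1
  have hL : lsup φ ≤ B := ciSup_le hLB
  have hL0 : 0 ≤ lsup φ := Real.iSup_nonneg fun ζ => norm_nonneg _
  have hLsq : lsup φ ^ 2 ≤ A * B := by
    have h1 : lsup φ ≤ Real.sqrt (A * B) := by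
      refine ciSup_le fun ζ => ?_
      rw [← Real.sqrt_sq (norm_nonneg (φ ζ))]
      exact Real.sqrt_le_sqrt (pointwise ζ)
    calc lsup φ ^ 2 ≤ Real.sqrt (A * B) ^ 2 := by
          exact pow_le_pow_left₀ hL0 h1 2
      _ = A * B := Real.sq_sqrt (mul_nonneg hA0 hB0)
  -- arithmetic
  set L := lsup φ with hLdef
  set m := 2 ^ (d - 1) with hm
  have hdm : 2 ^ d = 2 * m := by
    rw [hm, ← pow_succ']
    congr 1
    omega
  have hL2B : L ^ 2 ≤ B ^ 2 := pow_le_pow_left₀ hL0 hL 2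
  have main : L ^ (2 ^ d) ≤ A ^ p * B ^ (2 ^ d - p) := by
    calc L ^ (2 ^ d) = (L ^ 2) ^ m := by rw [hdm, pow_mul]
      _ = (L ^ 2) ^ p * (L ^ 2) ^ (m - p) := by
          rw [← pow_add, Nat.add_sub_cancel' hp2]
      _ ≤ (A * B) ^ p * (B ^ 2) ^ (m - p) := by
          apply mul_le_mul (pow_le_pow_left₀ (sq_nonneg _) hLsq p)
            (pow_le_pow_left₀ (sq_nonneg _) hL2B (m - p))
            (pow_nonneg (sq_nonneg _) _)
            (pow_nonneg (mul_nonneg hA0 hB0) _)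
      _ = A ^ p * B ^ (2 ^ d - p) := by
          rw [mul_pow, ← pow_mul, mul_assoc, ← pow_add]
          congr 2
          omega
  have h2pow : (1 : ℝ) ≤ 2 ^ (d * 2 ^ (d - 1) - p) :=
    one_le_pow₀ (by norm_num : (1:ℝ) ≤ 2)
  calc L ^ (2 ^ d) ≤ A ^ p * B ^ (2 ^ d - p) := main
    _ ≤ 2 ^ (d * 2 ^ (d - 1) - p) * (A ^ p * B ^ (2 ^ d - p)) :=
        le_mul_of_one_le_left (mul_nonneg (pow_nonneg hA0 _) (pow_nonneg hB0 _)) h2pow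
    _ = 2 ^ (d * 2 ^ (d - 1) - p) * A ^ p * B ^ (2 ^ d - p) := by ring
end
end

section
/- For a square-summable sequence φ: ℤ^d → ℂ and p ∈ {1,…,2^{d−1}}, ‖φ‖_{ℓ∞(ℤ^d)} ≤ μ_{p,d} · ‖∇_D φ‖_{ℓ²(ℤ^d)}^{p/2^d} · ‖φ‖_{ℓ²(ℤ^d)}^{1 − p/2^d}, where μ_{p,d} := (2^{d·2^{d−1}−p} / d^{p/2})^{1/2^d}. -/
noncomputable section
set_option maxHeartbeats 1000000


section aux

lemma norm_sq_sub_le' (x y : ℂ) : ‖x‖^2 - ‖y‖^2 ≤ ‖x - y‖ * (‖x‖ + ‖y‖) := by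
  have h1 : ‖x‖ - ‖y‖ ≤ ‖x - y‖ := norm_sub_norm_le x y
  nlinarith [norm_nonneg x, norm_nonneg y, norm_nonneg (x - y)]

end aux

lemma agmon1d (g : ℤ → ℂ) (hg : Summable fun n => ‖g n‖^2) (k : ℤ) :
    ‖g k‖^2 ≤ Real.sqrt (∑' n : ℤ, ‖g (n+1) - g n‖^2) * Real.sqrt (∑' n : ℤ, ‖g n‖^2) := by
  set h : ℤ → ℝ := fun n => ‖g n‖^2 with hh
  set b : ℤ → ℝ := fun n => ‖g (n+1) - g n‖ * (‖g (n+1)‖ + ‖g n‖) with hb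
  have hbnn : ∀ n, 0 ≤ b n := fun n => mul_nonneg (norm_nonneg _) (by positivity)
  have hshift : Summable (fun n : ℤ => h (n+1)) :=
    hg.comp_injective (add_left_injective 1)
  have hDg : Summable (fun n : ℤ => ‖g (n+1) - g n‖^2) := by
    apply Summable.of_nonneg_of_le (fun n => by positivity)
      (fun n => ?_) ((hshift.mul_left 2).add (hg.mul_left 2))
    have h0 := norm_sub_le (g (n+1)) (g n)
    simp only [hh]
    nlinarith [norm_nonneg (g (n+1)), norm_nonneg (g n), norm_nonneg (g (n+1) - g n),
      mul_self_le_mul_self (norm_nonneg (g (n+1) - g n)) h0,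
      sq_nonneg (‖g (n+1)‖ - ‖g n‖)]
  have hbsum : Summable b := by
    apply Summable.of_nonneg_of_le hbnn (fun n => ?_)
      ((hDg.mul_left (1/2)).add ((hshift.add hg).mul_left 2))
    have key : b n ≤ (1/2) * ‖g (n+1) - g n‖^2 + (1/2) * (‖g (n+1)‖ + ‖g n‖)^2 := by
      simp only [hb]
      nlinarith [sq_nonneg (‖g (n+1) - g n‖ - (‖g (n+1)‖ + ‖g n‖))]
    have : (1/2) * (‖g (n+1)‖ + ‖g n‖)^2 ≤ 2 * (h (n+1) + h n) := by
      simp only [hh]; nlinarith [sq_nonneg (‖g (n+1)‖ - ‖g n‖)]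
    simp only [hh] at *
    linarith
  -- pointwise telescoping bounds
  have hstep1 : ∀ m : ℤ, h m - h (m+1) ≤ b m := by
    intro m
    have := norm_sq_sub_le' (g m) (g (m+1))
    rw [norm_sub_rev] at this
    simp only [hh, hb]
    nlinarith [norm_nonneg (g (m+1) - g m), norm_nonneg (g m), norm_nonneg (g (m+1))]
  have hstep2 : ∀ m : ℤ, h (m+1) - h m ≤ b m := by
    intro m
    have := norm_sq_sub_le' (g (m+1)) (g m)
    simp only [hh, hb]
    nlinarith
  -- finite two-sided telescoping
  have aux : ∀ n : ℕ, 2 * h k - h (k + n) - h (k - n) ≤ ∑ j ∈ Finset.Ico (k - n) (k + n), b j := by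
    intro n
    induction n with
    | zero =>
      simp only [Nat.cast_zero, add_zero, sub_zero, Finset.Ico_self, Finset.sum_empty]
      linarith
    | succ n ih =>
      have hset : Finset.Ico (k - (n+1 : ℕ)) (k + (n+1 : ℕ)) =
          insert (k - (n:ℕ) - 1) (insert (k + n) (Finset.Ico (k - (n:ℕ)) (k + n))) := by
        ext j
        simp only [Finset.mem_insert, Finset.mem_Ico]
        push_cast
        omega
      have h1 : (k + (n:ℕ)) ∉ Finset.Ico (k - (n:ℕ)) (k + (n:ℕ)) := by
        simp [Finset.mem_Ico]
      have h2 : (k - (n:ℕ) - 1) ∉ insert (k + (n:ℕ)) (Finset.Ico (k - (n:ℕ)) (k + (n:ℕ))) := by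
        simp only [Finset.mem_insert, Finset.mem_Ico]
        omega
      rw [hset, Finset.sum_insert h2, Finset.sum_insert h1]
      have e1 : h (k + (n:ℕ)) - h (k + (n:ℕ) + 1) ≤ b (k + (n:ℕ)) := hstep1 _
      have e2 : h (k - (n:ℕ)) - h (k - (n:ℕ) - 1) ≤ b (k - (n:ℕ) - 1) := by
        have := hstep2 (k - (n:ℕ) - 1)
        have e : k - (n:ℕ) - 1 + 1 = k - (n:ℕ) := by ring
        rwa [e] at this
      have c1 : k + ((n:ℕ):ℤ) + 1 = k + ((n+1:ℕ):ℤ) := by push_cast; ring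
      have c2 : k - ((n:ℕ):ℤ) - 1 = k - ((n+1:ℕ):ℤ) := by push_cast; ring
      rw [c1] at e1
      rw [c2]
      rw [c2] at e2
      linarith
  -- pass to the limit
  have key : 2 * h k ≤ ∑' n, b n := by
    have hb1 : ∀ n : ℕ, 2 * h k - h (k + n) - h (k - n) ≤ ∑' n, b n := by
      intro n
      exact (aux n).trans (Summable.sum_le_tsum _ (fun j _ => hbnn j) hbsum)
    have ht1 : Filter.Tendsto (fun n : ℕ => h (k + n)) Filter.atTop (nhds 0) := by
      have hinj : Function.Injective (fun n : ℕ => k + (n:ℤ)) := by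
        intro a c hac; simpa using hac
      have := hg.tendsto_cofinite_zero.comp
        ((Function.Injective.tendsto_cofinite hinj).mono_left Nat.cofinite_eq_atTop.ge)
      exact this
    have ht2 : Filter.Tendsto (fun n : ℕ => h (k - n)) Filter.atTop (nhds 0) := by
      have hinj : Function.Injective (fun n : ℕ => k - (n:ℤ)) := by
        intro a c hac; simp only at hac; omega
      have := hg.tendsto_cofinite_zero.comp
        ((Function.Injective.tendsto_cofinite hinj).mono_left Nat.cofinite_eq_atTop.ge)
      exact this
    have htend : Filter.Tendsto (fun n : ℕ => 2 * h k - h (k + n) - h (k - n))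
        Filter.atTop (nhds (2 * h k)) := by
      have := ((tendsto_const_nhds (x := 2 * h k)).sub ht1).sub ht2
      simpa using this
    exact le_of_tendsto htend (Filter.Eventually.of_forall hb1)
  -- Cauchy-Schwarz
  have hCS : ∑' n, b n ≤ 2 * (Real.sqrt (∑' n : ℤ, ‖g (n+1) - g n‖^2) *
      Real.sqrt (∑' n : ℤ, ‖g n‖^2)) := by
    apply Summable.tsum_le_of_sum_le hbsum
    intro F
    have c1 : ∑ n ∈ F, b n ≤ Real.sqrt (∑ n ∈ F, ‖g (n+1) - g n‖^2) *
        Real.sqrt (∑ n ∈ F, (‖g (n+1)‖ + ‖g n‖)^2) :=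
      Real.sum_mul_le_sqrt_mul_sqrt F _ _
    have c2 : Real.sqrt (∑ n ∈ F, ‖g (n+1) - g n‖^2) ≤
        Real.sqrt (∑' n : ℤ, ‖g (n+1) - g n‖^2) :=
      Real.sqrt_le_sqrt (Summable.sum_le_tsum F (fun j _ => by positivity) hDg)
    have c3 : ∑ n ∈ F, (‖g (n+1)‖ + ‖g n‖)^2 ≤ 4 * ∑' n : ℤ, ‖g n‖^2 := by
      have p1 : ∑ n ∈ F, (‖g (n+1)‖ + ‖g n‖)^2 ≤ ∑ n ∈ F, (2 * h (n+1) + 2 * h n) := by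
        apply Finset.sum_le_sum
        intro n _
        simp only [hh]
        nlinarith [sq_nonneg (‖g (n+1)‖ - ‖g n‖)]
      have p2 : ∑ n ∈ F, (2 * h (n+1) + 2 * h n) =
          2 * ∑ n ∈ F, h (n+1) + 2 * ∑ n ∈ F, h n := by
        rw [Finset.sum_add_distrib, ← Finset.mul_sum, ← Finset.mul_sum]
      have p3 : ∑ n ∈ F, h (n+1) ≤ ∑' n : ℤ, ‖g n‖^2 := by
        have := Summable.sum_le_tsum F (fun j _ => by positivity) hshift
        refine this.trans ?_
        have : ∑' n : ℤ, h (n+1) = ∑' n : ℤ, h n := by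
          exact (Equiv.addRight (1:ℤ)).tsum_eq h
        rw [this]
      have p4 : ∑ n ∈ F, h n ≤ ∑' n : ℤ, ‖g n‖^2 := Summable.sum_le_tsum F (fun j _ => by positivity) hg
      calc ∑ n ∈ F, (‖g (n+1)‖ + ‖g n‖)^2 ≤ 2 * ∑ n ∈ F, h (n+1) + 2 * ∑ n ∈ F, h n := by
            rw [← p2]; exact p1
        _ ≤ 4 * ∑' n : ℤ, ‖g n‖^2 := by linarith
    have c4 : Real.sqrt (∑ n ∈ F, (‖g (n+1)‖ + ‖g n‖)^2) ≤
        2 * Real.sqrt (∑' n : ℤ, ‖g n‖^2) := by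
      have := Real.sqrt_le_sqrt c3
      rwa [show (4 : ℝ) * ∑' n : ℤ, ‖g n‖^2 = 2^2 * ∑' n : ℤ, ‖g n‖^2 by norm_num,
        Real.sqrt_mul (by positivity), Real.sqrt_sq (by norm_num)] at this
    calc ∑ n ∈ F, b n ≤ _ := c1
      _ ≤ Real.sqrt (∑' n : ℤ, ‖g (n+1) - g n‖^2) * (2 * Real.sqrt (∑' n : ℤ, ‖g n‖^2)) :=
          mul_le_mul c2 c4 (Real.sqrt_nonneg _) (Real.sqrt_nonneg _)
      _ = 2 * (Real.sqrt (∑' n : ℤ, ‖g (n+1) - g n‖^2) * Real.sqrt (∑' n : ℤ, ‖g n‖^2)) := by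
          ring
  have : h k = ‖g k‖^2 := rfl
  linarith

lemma update_inj {d : ℕ} (ζ : Fin d → ℤ) (i : Fin d) :
    Function.Injective (fun t : ℤ => Function.update ζ i t) := by
  intro a b hab
  simpa using congrFun hab i

lemma shift_inj {d : ℕ} (i : Fin d) :
    Function.Injective (fun ζ : Fin d → ℤ => Function.update ζ i (ζ i + 1)) := by
  intro a b hab
  funext j
  have hj := congrFun hab j
  by_cases hji : j = i
  · subst hji
    simp only [Function.update_self] at hj
    omega
  · simpa [Function.update_of_ne hji] using hj

lemma rpow_core {G L s θ : ℝ} (hG : 0 < G) (hL : 0 < L) (hs : 0 < s)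
    (hθ1 : 0 < θ) (hθ2 : θ ≤ 1/2) (hGL : G ≤ 2 * s * L) :
    G * L / s ≤ (2 ^ ((1:ℝ)/2 - θ) * s ^ (-θ) * G ^ θ * L ^ (1 - θ))^2 := by
  have h1 : G * L / s = G ^ (2*θ) * G ^ (1 - 2*θ) * L / s := by
    rw [← Real.rpow_add hG, show 2*θ + (1-2*θ) = (1:ℝ) by ring, Real.rpow_one]
  have h2 : G ^ (2*θ) * G ^ (1 - 2*θ) * L / s ≤ G ^ (2*θ) * (2*s*L) ^ (1 - 2*θ) * L / s := by
    have hmono : G ^ (1 - 2*θ) ≤ (2*s*L) ^ (1 - 2*θ) :=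
      Real.rpow_le_rpow hG.le hGL (by linarith)
    have hstep : G ^ (2*θ) * G ^ (1 - 2*θ) * L ≤ G ^ (2*θ) * (2*s*L) ^ (1 - 2*θ) * L :=
      mul_le_mul_of_nonneg_right (mul_le_mul_of_nonneg_left hmono (by positivity)) hL.le
    exact (div_le_div_iff_of_pos_right hs).mpr hstep
  have h3 : G ^ (2*θ) * (2*s*L) ^ (1 - 2*θ) * L / s
      = (2 ^ ((1:ℝ)/2 - θ) * s ^ (-θ) * G ^ θ * L ^ (1 - θ))^2 := by
    have hXpos : 0 < G ^ (2*θ) * (2*s*L) ^ (1 - 2*θ) * L / s := by positivity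
    have hYpos : 0 < (2 ^ ((1:ℝ)/2 - θ) * s ^ (-θ) * G ^ θ * L ^ (1 - θ))^2 := by positivity
    rw [← Real.exp_log hXpos, ← Real.exp_log hYpos]
    congr 1
    rw [Real.log_div (by positivity) (by positivity),
      Real.log_mul (by positivity) (by positivity),
      Real.log_mul (by positivity) (by positivity),
      Real.log_rpow hG, Real.log_rpow (by positivity : (0:ℝ) < 2*s*L),
      Real.log_mul (by positivity) (by positivity),
      Real.log_mul (by positivity) (by positivity),
      Real.log_pow,
      Real.log_mul (by positivity) (by positivity),
      Real.log_mul (by positivity) (by positivity),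
      Real.log_mul (by positivity) (by positivity),
      Real.log_rpow two_pos, Real.log_rpow hs, Real.log_rpow hG, Real.log_rpow hL]
    push_cast
    ring
  linarith [h2, h1.le, h1.ge, h3.le, h3.ge]


/-- The Agmon–Kolmogorov inequality on ℓ²(ℤ^d). -/
theorem agmon_kolmogorov {d : ℕ} (hd : 1 ≤ d) (φ : (Fin d → ℤ) → ℂ)
    (h : Summable fun ζ : Fin d → ℤ => ‖φ ζ‖ ^ 2) (p : ℕ)
    (hp1 : 1 ≤ p) (hp2 : p ≤ 2 ^ (d - 1)) :
    lsup φ ≤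
      ((2 ^ (d * 2 ^ (d - 1) - p) / (d : ℝ) ^ ((p : ℝ) / 2)) ^ ((1 : ℝ) / 2 ^ d)) *
        gradn φ ^ ((p : ℝ) / 2 ^ d) * l2 φ ^ (1 - (p : ℝ) / 2 ^ d) := by

  classical
  have hd0 : (0:ℝ) < d := by exact_mod_cast hd
  set S : ℝ := ∑' ζ : Fin d → ℤ, ‖φ ζ‖^2 with hSdef
  have hSnn : 0 ≤ S := tsum_nonneg (fun ζ => by positivity)
  have hshiftSum : ∀ i : Fin d,
      Summable (fun ζ : Fin d → ℤ => ‖φ (Function.update ζ i (ζ i + 1))‖^2) :=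
    fun i => h.comp_injective (shift_inj i)
  have hDle : ∀ (i : Fin d) (ζ : Fin d → ℤ), ‖Dop i φ ζ‖^2 ≤
      2 * ‖φ (Function.update ζ i (ζ i + 1))‖^2 + 2 * ‖φ ζ‖^2 := by
    intro i ζ
    have h0 := norm_sub_le (φ (Function.update ζ i (ζ i + 1))) (φ ζ)
    simp only [Dop]
    nlinarith [norm_nonneg (φ (Function.update ζ i (ζ i + 1))), norm_nonneg (φ ζ),
      norm_nonneg (φ (Function.update ζ i (ζ i + 1)) - φ ζ),
      mul_self_le_mul_self (norm_nonneg (φ (Function.update ζ i (ζ i + 1)) - φ ζ)) h0,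
      sq_nonneg (‖φ (Function.update ζ i (ζ i + 1))‖ - ‖φ ζ‖)]
  have hDsum : ∀ i : Fin d, Summable (fun ζ : Fin d → ℤ => ‖Dop i φ ζ‖^2) := by
    intro i
    exact Summable.of_nonneg_of_le (fun ζ => by positivity) (hDle i)
      (((hshiftSum i).mul_left 2).add (h.mul_left 2))
  set E : Fin d → ℝ := fun i => ∑' ζ : Fin d → ℤ, ‖Dop i φ ζ‖^2 with hEdef
  have hEnn : ∀ i, 0 ≤ E i := fun i => tsum_nonneg (fun ζ => by positivity)
  have hshiftS : ∀ i : Fin d,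
      (∑' ζ : Fin d → ℤ, ‖φ (Function.update ζ i (ζ i + 1))‖^2) ≤ S := by
    intro i
    exact Summable.tsum_le_tsum_of_inj _ (shift_inj i) (fun c _ => by positivity)
      (fun ζ => le_refl _) (hshiftSum i) h
  have hE4S : ∀ i, E i ≤ 4 * S := by
    intro i
    calc E i ≤ ∑' ζ : Fin d → ℤ,
          (2 * ‖φ (Function.update ζ i (ζ i + 1))‖^2 + 2 * ‖φ ζ‖^2) :=
        Summable.tsum_le_tsum (hDle i) (hDsum i) (((hshiftSum i).mul_left 2).add (h.mul_left 2))
      _ = 2 * (∑' ζ : Fin d → ℤ, ‖φ (Function.update ζ i (ζ i + 1))‖^2) + 2 * S := by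
        rw [Summable.tsum_add ((hshiftSum i).mul_left 2) (h.mul_left 2), tsum_mul_left, tsum_mul_left]
      _ ≤ 4 * S := by linarith [hshiftS i]
  have hGnn : 0 ≤ gradn φ := Real.sqrt_nonneg _
  have hLnn : 0 ≤ l2 φ := Real.sqrt_nonneg _
  have hG2 : (gradn φ)^2 = ∑ i, E i := by
    rw [gradn, Real.sq_sqrt (Finset.sum_nonneg fun i _ => hEnn i)]
  have hL2 : (l2 φ)^2 = S := by rw [l2, Real.sq_sqrt hSnn]
  have hGL : gradn φ ≤ 2 * Real.sqrt d * l2 φ := by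
    have hsum : ∑ i, E i ≤ (d:ℝ) * (4 * S) := by
      calc ∑ i, E i ≤ ∑ _i : Fin d, 4 * S := Finset.sum_le_sum (fun i _ => hE4S i)
        _ = (d:ℝ) * (4 * S) := by
          rw [Finset.sum_const, Finset.card_univ, Fintype.card_fin, nsmul_eq_mul]
    have : gradn φ ≤ Real.sqrt ((d:ℝ) * (4 * S)) := by
      rw [gradn]
      exact Real.sqrt_le_sqrt hsum
    calc gradn φ ≤ Real.sqrt ((d:ℝ) * (4 * S)) := this
      _ = 2 * Real.sqrt d * l2 φ := by
        rw [show (d:ℝ) * (4 * S) = 2^2 * ((d:ℝ) * S) by ring, Real.sqrt_mul (by positivity),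
          Real.sqrt_sq (by norm_num : (0:ℝ) ≤ 2), Real.sqrt_mul hd0.le, l2]
        ring
  -- pigeonhole: some direction has small energy
  haveI : Nonempty (Fin d) := ⟨⟨0, hd⟩⟩
  have hex : ∃ i : Fin d, E i ≤ (∑ j, E j) / d := by
    by_contra hcon
    push_neg at hcon
    have hlt : ∑ _j : Fin d, (∑ j, E j) / d < ∑ j : Fin d, E j :=
      Finset.sum_lt_sum_of_nonempty Finset.univ_nonempty (fun i _ => hcon i)
    rw [Finset.sum_const, Finset.card_univ, Fintype.card_fin, nsmul_eq_mul,
      mul_div_cancel₀ _ (ne_of_gt hd0)] at hlt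
    exact lt_irrefl _ hlt
  obtain ⟨i0, hi0⟩ := hex
  -- pointwise bound via the 1d Agmon inequality along direction i0
  have key : ∀ ζ : Fin d → ℤ, ‖φ ζ‖^2 ≤ gradn φ * l2 φ / Real.sqrt d := by
    intro ζ
    set g : ℤ → ℂ := fun t => φ (Function.update ζ i0 t) with hgdef
    have hg : Summable fun t => ‖g t‖^2 := h.comp_injective (update_inj ζ i0)
    have h1 := agmon1d g hg (ζ i0)
    have hgk : g (ζ i0) = φ ζ := by
      simp only [hgdef, Function.update_eq_self]
    have hDgt : ∀ t : ℤ, g (t+1) - g t = Dop i0 φ (Function.update ζ i0 t) := by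
      intro t
      simp only [hgdef, Dop, Function.update_self, Function.update_idem]
    have hA : (∑' t : ℤ, ‖g (t+1) - g t‖^2) ≤ E i0 := by
      have he : (∑' t : ℤ, ‖g (t+1) - g t‖^2)
          = ∑' t : ℤ, ‖Dop i0 φ (Function.update ζ i0 t)‖^2 := by
        apply tsum_congr
        intro t
        rw [hDgt t]
      rw [he]
      exact Summable.tsum_le_tsum_of_inj _ (update_inj ζ i0) (fun c _ => by positivity)
        (fun t => le_refl _) ((hDsum i0).comp_injective (update_inj ζ i0)) (hDsum i0)
    have hB : (∑' t : ℤ, ‖g t‖^2) ≤ S :=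
      Summable.tsum_le_tsum_of_inj _ (update_inj ζ i0) (fun c _ => by positivity)
        (fun t => le_refl _) hg h
    have h2 : ‖φ ζ‖^2 ≤ Real.sqrt (E i0) * Real.sqrt S := by
      rw [← hgk]
      exact h1.trans (mul_le_mul (Real.sqrt_le_sqrt hA) (Real.sqrt_le_sqrt hB)
        (Real.sqrt_nonneg _) (Real.sqrt_nonneg _))
    have h3 : Real.sqrt (E i0) ≤ gradn φ / Real.sqrt d := by
      have hEq : E i0 ≤ (gradn φ)^2 / d := by rw [hG2]; exact hi0
      calc Real.sqrt (E i0) ≤ Real.sqrt ((gradn φ)^2 / d) := Real.sqrt_le_sqrt hEq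
        _ = gradn φ / Real.sqrt d := by
          rw [Real.sqrt_div (sq_nonneg _), Real.sqrt_sq hGnn]
    calc ‖φ ζ‖^2 ≤ Real.sqrt (E i0) * Real.sqrt S := h2
      _ ≤ (gradn φ / Real.sqrt d) * Real.sqrt S :=
        mul_le_mul_of_nonneg_right h3 (Real.sqrt_nonneg _)
      _ = gradn φ * l2 φ / Real.sqrt d := by rw [l2]; ring
  -- the exponent θ
  set θ : ℝ := (p:ℝ) / 2^d with hθdef
  have hpow2 : (2:ℝ)^d = 2^(d-1) * 2 := by
    conv_lhs => rw [← Nat.sub_add_cancel hd]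
    rw [pow_succ]
  have hθpos : 0 < θ := by
    apply div_pos _ (by positivity)
    exact_mod_cast hp1
  have hθle : θ ≤ 1/2 := by
    rw [hθdef, hpow2, div_le_iff₀ (by positivity)]
    have h2' : (p:ℝ) ≤ 2^(d-1) := by exact_mod_cast hp2
    nlinarith [h2']
  -- evaluating the constant
  set C : ℝ := ((2 ^ (d * 2 ^ (d - 1) - p) / (d : ℝ) ^ ((p : ℝ) / 2)) ^ ((1 : ℝ) / 2 ^ d))
    with hCdef
  have hpN : p ≤ d * 2^(d-1) := hp2.trans (Nat.le_mul_of_pos_left _ hd)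
  have hC : C = 2 ^ ((d:ℝ)/2 - θ) * (d:ℝ) ^ (-(θ/2)) := by
    rw [hCdef, Real.div_rpow (by positivity) (Real.rpow_nonneg hd0.le _),
      ← Real.rpow_natCast 2 (d * 2 ^ (d - 1) - p), ← Real.rpow_mul (by norm_num : (0:ℝ) ≤ 2),
      ← Real.rpow_mul hd0.le]
    have hNc : ((d * 2 ^ (d - 1) - p : ℕ) : ℝ) = (d:ℝ) * 2^(d-1) - p := by
      rw [Nat.cast_sub hpN]
      push_cast
      ring
    have he1 : ((d * 2 ^ (d - 1) - p : ℕ) : ℝ) * ((1:ℝ) / 2^d) = (d:ℝ)/2 - θ := by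
      rw [hNc, hθdef, hpow2]
      field_simp
    have he2 : (p:ℝ)/2 * ((1:ℝ)/2^d) = θ/2 := by
      rw [hθdef]
      ring
    rw [he1, he2, Real.rpow_neg hd0.le, div_eq_mul_inv]
  have hCnn : 0 ≤ C := Real.rpow_nonneg (by positivity) _
  have hRHSnn : 0 ≤ C * gradn φ ^ θ * l2 φ ^ (1 - θ) := by
    apply mul_nonneg (mul_nonneg hCnn (Real.rpow_nonneg hGnn _)) (Real.rpow_nonneg hLnn _)
  -- pointwise final bound
  have main : ∀ ζ : Fin d → ℤ, ‖φ ζ‖ ≤ C * gradn φ ^ θ * l2 φ ^ (1 - θ) := by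
    intro ζ
    rcases eq_or_lt_of_le hGnn with hG0 | hGpos
    · have : ‖φ ζ‖^2 ≤ 0 := by
        have := key ζ
        rw [← hG0] at this
        simpa using this
      have hz : ‖φ ζ‖ = 0 := by nlinarith [norm_nonneg (φ ζ)]
      rw [hz]; exact hRHSnn
    rcases eq_or_lt_of_le hLnn with hL0 | hLpos
    · have : ‖φ ζ‖^2 ≤ 0 := by
        have := key ζ
        rw [← hL0] at this
        simpa using this
      have hz : ‖φ ζ‖ = 0 := by nlinarith [norm_nonneg (φ ζ)]
      rw [hz]; exact hRHSnn
    have hs : 0 < Real.sqrt d := Real.sqrt_pos.mpr hd0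
    have hcore := rpow_core hGpos hLpos hs hθpos hθle hGL
    have h5 : ‖φ ζ‖ ≤ 2 ^ ((1:ℝ)/2 - θ) * (Real.sqrt d) ^ (-θ) * gradn φ ^ θ * l2 φ ^ (1 - θ) := by
      have hx := (key ζ).trans hcore
      have hy := Real.sqrt_le_sqrt hx
      rwa [Real.sqrt_sq (norm_nonneg _), Real.sqrt_sq (by positivity)] at hy
    have hsd : (Real.sqrt d) ^ (-θ) = (d:ℝ) ^ (-(θ/2)) := by
      rw [Real.sqrt_eq_rpow, ← Real.rpow_mul hd0.le]
      norm_num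
      ring_nf
    rw [hsd] at h5
    refine h5.trans ?_
    have hconst : (2:ℝ) ^ ((1:ℝ)/2 - θ) * (d:ℝ) ^ (-(θ/2)) ≤ C := by
      rw [hC]
      apply mul_le_mul_of_nonneg_right _ (Real.rpow_nonneg hd0.le _)
      apply Real.rpow_le_rpow_of_exponent_le (by norm_num)
      have : (1:ℝ) ≤ d := by exact_mod_cast hd
      linarith
    calc 2 ^ ((1:ℝ)/2 - θ) * (d:ℝ) ^ (-(θ/2)) * gradn φ ^ θ * l2 φ ^ (1 - θ)
        = (2 ^ ((1:ℝ)/2 - θ) * (d:ℝ) ^ (-(θ/2))) * (gradn φ ^ θ * l2 φ ^ (1 - θ)) := by ring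
      _ ≤ C * (gradn φ ^ θ * l2 φ ^ (1 - θ)) := by
          apply mul_le_mul_of_nonneg_right hconst
          positivity
      _ = C * gradn φ ^ θ * l2 φ ^ (1 - θ) := by ring
  exact ciSup_le main
end
end

section
/- For a square-summable sequence φ: ℤ^d → ℂ, ‖φ‖_{ℓ∞(ℤ^d)} ≤ (2^{(d−1)·2^{d−1}} / d^{2^{d−2}})^{1/2^d} · ‖∇_D φ‖_{ℓ²(ℤ^d)}^{1/2} · ‖φ‖_{ℓ²(ℤ^d)}^{1/2}, i.e., the case p = 2^{d−1} of the discrete Agmon–Kolmogorov inequality, which has exponent 1/2 on both norms. -/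
noncomputable section

/-- Product of two nonneg ℓ² functions is summable. -/
lemma summable_mul_of_sq {α : Type*} {f g : α → ℝ} (hf0 : ∀ x, 0 ≤ f x) (hg0 : ∀ x, 0 ≤ g x)
    (hf : Summable fun x => f x ^ 2) (hg : Summable fun x => g x ^ 2) :
    Summable fun x => f x * g x := by
  refine Summable.of_nonneg_of_le (fun x => mul_nonneg (hf0 x) (hg0 x)) (fun x => ?_)
    ((hf.add hg).mul_left ((1 : ℝ) / 2))
  nlinarith [sq_nonneg (f x - g x)]

/-- Cauchy–Schwarz for tsums of nonneg functions. -/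
lemma tsum_mul_le_sqrt_mul_sqrt {α : Type*} (f g : α → ℝ) (hf0 : ∀ x, 0 ≤ f x)
    (hg0 : ∀ x, 0 ≤ g x) (hf : Summable fun x => f x ^ 2) (hg : Summable fun x => g x ^ 2) :
    ∑' x, f x * g x ≤ Real.sqrt (∑' x, f x ^ 2) * Real.sqrt (∑' x, g x ^ 2) := by
  refine Summable.tsum_le_of_sum_le (summable_mul_of_sq hf0 hg0 hf hg) fun s => ?_
  calc ∑ x ∈ s, f x * g x
      ≤ Real.sqrt (∑ x ∈ s, f x ^ 2) * Real.sqrt (∑ x ∈ s, g x ^ 2) :=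
        Real.sum_mul_le_sqrt_mul_sqrt s f g
    _ ≤ _ := by
        refine mul_le_mul (Real.sqrt_le_sqrt (Summable.sum_le_tsum s (fun i _ => sq_nonneg _) hf))
          (Real.sqrt_le_sqrt (Summable.sum_le_tsum s (fun i _ => sq_nonneg _) hg))
          (Real.sqrt_nonneg _) (Real.sqrt_nonneg _)

/-- Two-sided telescoping bound on a line. -/
lemma line_bound (g : ℤ → ℝ) (hg0 : ∀ t, 0 ≤ g t) (hgs : Summable g)
    (hΔ : Summable fun t => |g (t + 1) - g t|) (n : ℤ) :
    2 * g n ≤ ∑' t, |g (t + 1) - g t| := by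
  set T := ∑' t, |g (t + 1) - g t| with hT
  have chain : ∀ (a : ℤ) (k : ℕ),
      |g (a + (k : ℤ)) - g a| ≤ ∑ j ∈ Finset.range k, |g (a + (j : ℤ) + 1) - g (a + (j : ℤ))| := by
    intro a k
    induction k with
    | zero => simp
    | succ k ih =>
      rw [Finset.sum_range_succ]
      have hcast : a + ((k + 1 : ℕ) : ℤ) = a + (k : ℤ) + 1 := by push_cast; ring
      rw [hcast]
      have tri := abs_sub_le (g (a + (k : ℤ) + 1)) (g (a + (k : ℤ))) (g a)
      linarith
  have key : ∀ m' m : ℤ, m' ≤ n → n ≤ m → 2 * g n ≤ g m' + g m + T := by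
    intro m' m h1 h2
    obtain ⟨k, hk⟩ : ∃ k : ℕ, m = n + (k : ℤ) := ⟨(m - n).toNat, by omega⟩
    obtain ⟨k', hk'⟩ : ∃ k' : ℕ, n = m' + (k' : ℤ) := ⟨(n - m').toNat, by omega⟩
    set e2 : ℕ ↪ ℤ := ⟨fun j => n + (j : ℤ), fun a b hab => by simpa using hab⟩ with he2
    set e1 : ℕ ↪ ℤ := ⟨fun j => m' + (j : ℤ), fun a b hab => by simpa using hab⟩ with he1
    have c1 : |g m - g n| ≤ ∑ t ∈ (Finset.range k).map e2, |g (t + 1) - g t| := by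
      rw [Finset.sum_map]
      rw [hk]; exact chain n k
    have c2 : |g n - g m'| ≤ ∑ t ∈ (Finset.range k').map e1, |g (t + 1) - g t| := by
      rw [Finset.sum_map]
      rw [hk']; exact chain m' k'
    have hdisj : Disjoint ((Finset.range k').map e1) ((Finset.range k).map e2) := by
      rw [Finset.disjoint_left]
      intro t ht1 ht2
      simp only [Finset.mem_map, Finset.mem_range, Function.Embedding.coeFn_mk, he1, he2] at ht1 ht2
      obtain ⟨j1, hj1, rfl⟩ := ht1
      obtain ⟨j2, hj2, hj2e⟩ := ht2
      change n + (j2 : ℤ) = m' + (j1 : ℤ) at hj2e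
      omega
    have hsum : ∑ t ∈ (Finset.range k').map e1, |g (t + 1) - g t|
        + ∑ t ∈ (Finset.range k).map e2, |g (t + 1) - g t| ≤ T := by
      rw [← Finset.sum_union hdisj]
      exact Summable.sum_le_tsum _ (fun i _ => abs_nonneg _) hΔ
    have e3 : g n - g m ≤ |g m - g n| := by rw [abs_sub_comm]; exact le_abs_self _
    have e4 : g n - g m' ≤ |g n - g m'| := le_abs_self _
    linarith
  refine le_of_forall_sub_le fun ε hε => ?_
  have hcof : Filter.Tendsto g Filter.cofinite (nhds 0) := hgs.tendsto_cofinite_zero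
  have hev : {t : ℤ | ¬ g t < ε / 2}.Finite := by
    have := hcof.eventually_lt_const (show (0:ℝ) < ε / 2 by linarith)
    rwa [Filter.eventually_cofinite] at this
  obtain ⟨m, hm⟩ := ((Set.Ici_infinite n).diff hev).nonempty
  obtain ⟨m', hm'⟩ := ((Set.Iic_infinite n).diff hev).nonempty
  have hgm : g m < ε / 2 := by
    have h2 := hm.2; simp only [Set.mem_setOf_eq, not_not] at h2; exact h2
  have hgm' : g m' < ε / 2 := by
    have h2 := hm'.2; simp only [Set.mem_setOf_eq, not_not] at h2; exact h2
  have := key m' m hm'.1 hm.1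
  linarith

/-- Shift by one in direction `i`, as an equivalence of ℤ^d. -/
def shiftE {d : ℕ} (i : Fin d) : (Fin d → ℤ) ≃ (Fin d → ℤ) where
  toFun η := Function.update η i (η i + 1)
  invFun η := Function.update η i (η i - 1)
  left_inv η := by
    funext j
    rcases eq_or_ne j i with rfl | hj
    · simp
    · simp [Function.update_of_ne hj]
  right_inv η := by
    funext j
    rcases eq_or_ne j i with rfl | hj
    · simp
    · simp [Function.update_of_ne hj]

lemma pointwise_bound {d : ℕ} (φ : (Fin d → ℤ) → ℂ)
    (h : Summable fun ζ : Fin d → ℤ => ‖φ ζ‖ ^ 2) (i : Fin d) (ζ : Fin d → ℤ) :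
    ‖φ ζ‖ ^ 2 ≤ Real.sqrt (∑' η : Fin d → ℤ, ‖Dop i φ η‖ ^ 2) * l2 φ := by
  set S := shiftE i with hSdef
  have hS : ∀ η, Dop i φ η = φ (S η) - φ η := fun η => rfl
  have hψS : Summable fun η : Fin d → ℤ => ‖φ (S η)‖ ^ 2 :=
    (S.summable_iff (f := fun η : Fin d → ℤ => ‖φ η‖ ^ 2)).mpr h
  have hD2 : Summable fun η : Fin d → ℤ => ‖Dop i φ η‖ ^ 2 := by
    refine Summable.of_nonneg_of_le (fun _ => sq_nonneg _) (fun η => ?_)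
      ((hψS.add h).mul_left 2)
    rw [hS]
    have h1 := norm_sub_le (φ (S η)) (φ η)
    have h2 := mul_self_le_mul_self (norm_nonneg (φ (S η) - φ η)) h1
    nlinarith [sq_nonneg (‖φ (S η)‖ - ‖φ η‖)]
  set F : (Fin d → ℤ) → ℝ := fun η => |‖φ (S η)‖ ^ 2 - ‖φ η‖ ^ 2| with hF
  have pointF : ∀ η, F η ≤ ‖Dop i φ η‖ * ‖φ (S η)‖ + ‖Dop i φ η‖ * ‖φ η‖ := by
    intro η
    have hab : |‖φ (S η)‖ - ‖φ η‖| ≤ ‖φ (S η) - φ η‖ := abs_norm_sub_norm_le _ _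
    have hfac : ‖φ (S η)‖ ^ 2 - ‖φ η‖ ^ 2
        = (‖φ (S η)‖ - ‖φ η‖) * (‖φ (S η)‖ + ‖φ η‖) := by ring
    rw [hF]
    simp only
    rw [hfac, abs_mul, abs_of_nonneg (by positivity : (0:ℝ) ≤ ‖φ (S η)‖ + ‖φ η‖), hS]
    calc |‖φ (S η)‖ - ‖φ η‖| * (‖φ (S η)‖ + ‖φ η‖)
        ≤ ‖φ (S η) - φ η‖ * (‖φ (S η)‖ + ‖φ η‖) :=
          mul_le_mul_of_nonneg_right hab (by positivity)
      _ = _ := by ring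
  have hprod1 : Summable fun η : Fin d → ℤ => ‖Dop i φ η‖ * ‖φ (S η)‖ :=
    summable_mul_of_sq (fun _ => norm_nonneg _) (fun _ => norm_nonneg _) hD2 hψS
  have hprod2 : Summable fun η : Fin d → ℤ => ‖Dop i φ η‖ * ‖φ η‖ :=
    summable_mul_of_sq (fun _ => norm_nonneg _) (fun _ => norm_nonneg _) hD2 h
  have hFs : Summable F :=
    Summable.of_nonneg_of_le (fun _ => abs_nonneg _) pointF (hprod1.add hprod2)
  have hL2 : ∑' η : Fin d → ℤ, ‖φ (S η)‖ ^ 2 = ∑' η : Fin d → ℤ, ‖φ η‖ ^ 2 :=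
    S.tsum_eq (fun η : Fin d → ℤ => ‖φ η‖ ^ 2)
  have hTbound : ∑' η, F η ≤ 2 * (Real.sqrt (∑' η : Fin d → ℤ, ‖Dop i φ η‖ ^ 2) * l2 φ) := by
    calc ∑' η, F η ≤ ∑' η, (‖Dop i φ η‖ * ‖φ (S η)‖ + ‖Dop i φ η‖ * ‖φ η‖) :=
          Summable.tsum_le_tsum pointF hFs (hprod1.add hprod2)
      _ = (∑' η, ‖Dop i φ η‖ * ‖φ (S η)‖) + ∑' η, ‖Dop i φ η‖ * ‖φ η‖ :=
          Summable.tsum_add hprod1 hprod2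
      _ ≤ Real.sqrt (∑' η : Fin d → ℤ, ‖Dop i φ η‖ ^ 2)
            * Real.sqrt (∑' η : Fin d → ℤ, ‖φ (S η)‖ ^ 2)
          + Real.sqrt (∑' η : Fin d → ℤ, ‖Dop i φ η‖ ^ 2)
            * Real.sqrt (∑' η : Fin d → ℤ, ‖φ η‖ ^ 2) := by
          exact add_le_add
            (tsum_mul_le_sqrt_mul_sqrt _ _ (fun _ => norm_nonneg _) (fun _ => norm_nonneg _)
              hD2 hψS)
            (tsum_mul_le_sqrt_mul_sqrt _ _ (fun _ => norm_nonneg _) (fun _ => norm_nonneg _)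
              hD2 h)
      _ = 2 * (Real.sqrt (∑' η : Fin d → ℤ, ‖Dop i φ η‖ ^ 2) * l2 φ) := by
          rw [hL2]; unfold l2; ring
  set u : ℤ → (Fin d → ℤ) := fun t => Function.update ζ i t with hu
  have huinj : Function.Injective u := by
    intro a b hab
    have := congrFun hab i
    simpa [hu] using this
  have hline : ∀ t : ℤ, S (u t) = u (t + 1) := by
    intro t
    funext j
    rcases eq_or_ne j i with rfl | hj
    · simp [hu, hSdef, shiftE]
    · simp [hu, hSdef, shiftE, Function.update_of_ne hj]
  set g : ℤ → ℝ := fun t => ‖φ (u t)‖ ^ 2 with hg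
  have hgsum : Summable g := h.comp_injective huinj
  have hgF : ∀ t : ℤ, |g (t + 1) - g t| = F (u t) := by
    intro t
    rw [hg, hF]
    simp only
    rw [hline t]
  have hΔ : Summable fun t => |g (t + 1) - g t| := by
    refine (hFs.comp_injective huinj).congr fun t => ?_
    exact (hgF t).symm
  have hline2 : 2 * g (ζ i) ≤ ∑' t, |g (t + 1) - g t| :=
    line_bound g (fun _ => sq_nonneg _) hgsum hΔ (ζ i)
  have hgζ : g (ζ i) = ‖φ ζ‖ ^ 2 := by
    rw [hg]; simp only [hu, Function.update_eq_self]
  have hsub : ∑' t, |g (t + 1) - g t| ≤ ∑' η, F η :=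
    Summable.tsum_le_tsum_of_inj u huinj (fun c _ => abs_nonneg _) (fun t => le_of_eq (hgF t)) hΔ hFs
  rw [hgζ] at hline2
  linarith

/-- Constant comparison. -/
lemma const_le {d : ℕ} (hd : 1 ≤ d) :
    ((1 : ℝ) / d) ^ ((1 : ℝ) / 4) ≤
      ((2 : ℝ) ^ ((d - 1) * 2 ^ (d - 1)) / (d : ℝ) ^ (2 ^ (d - 2))) ^ ((1 : ℝ) / 2 ^ d) := by
  rcases eq_or_lt_of_le hd with hd1 | hd2
  · subst hd1
    norm_num
  · obtain ⟨k, rfl⟩ : ∃ k, d = k + 2 := ⟨d - 2, by omega⟩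
    have e1 : k + 2 - 1 = k + 1 := by omega
    have e2 : k + 2 - 2 = k := by omega
    rw [e1, e2]
    have hN : (0 : ℝ) < ((k + 2 : ℕ) : ℝ) := by positivity
    have h1 : (1 : ℝ) / ((k + 2 : ℕ) : ℝ) ^ (2 ^ k) ≤
        (2 : ℝ) ^ ((k + 1) * 2 ^ (k + 1)) / ((k + 2 : ℕ) : ℝ) ^ (2 ^ k) := by
      gcongr
      exact one_le_pow₀ one_le_two
    have h2 := Real.rpow_le_rpow (by positivity) h1
      (by positivity : (0:ℝ) ≤ (1 : ℝ) / 2 ^ (k + 2))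
    refine le_trans (le_of_eq ?_) h2
    rw [← one_div_pow, ← Real.rpow_natCast ((1:ℝ) / ((k+2:ℕ):ℝ)) (2^k),
      ← Real.rpow_mul (by positivity : (0:ℝ) ≤ (1:ℝ) / ((k+2:ℕ):ℝ))]
    congr 1
    have h4 : (2:ℝ) ^ (k + 2) = 2 ^ k * 4 := by rw [pow_add]; norm_num
    push_cast
    rw [h4]
    have : (2:ℝ) ^ k ≠ 0 := by positivity
    field_simp

/-- The balanced case `p = 2^(d-1)` of the Agmon–Kolmogorov inequality on ℓ²(ℤ^d). -/
theorem agmon_kolmogorov_balanced {d : ℕ} (hd : 1 ≤ d) (φ : (Fin d → ℤ) → ℂ)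
    (h : Summable fun ζ : Fin d → ℤ => ‖φ ζ‖ ^ 2) :
    lsup φ ≤
      (((2 : ℝ) ^ ((d - 1) * 2 ^ (d - 1)) / (d : ℝ) ^ (2 ^ (d - 2))) ^ ((1 : ℝ) / 2 ^ d)) *
        gradn φ ^ ((1 : ℝ) / 2) * l2 φ ^ ((1 : ℝ) / 2) := by
  have hL0 : 0 ≤ l2 φ := Real.sqrt_nonneg _
  have hG0 : 0 ≤ gradn φ := Real.sqrt_nonneg _
  have hdpos : (0:ℝ) < (d:ℝ) := by exact_mod_cast hd
  have keyζ : ∀ ζ : Fin d → ℤ,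
      ‖φ ζ‖ ≤ ((1:ℝ)/d) ^ ((1:ℝ)/4) * gradn φ ^ ((1:ℝ)/2) * l2 φ ^ ((1:ℝ)/2) := by
    intro ζ
    have key4 : ‖φ ζ‖ ^ 4 ≤ gradn φ ^ 2 * l2 φ ^ 2 / d := by
      have hsq : ∀ i : Fin d,
          (‖φ ζ‖ ^ 2) ^ 2 ≤ (∑' η : Fin d → ℤ, ‖Dop i φ η‖ ^ 2) * l2 φ ^ 2 := by
        intro i
        have hp := pointwise_bound φ h i ζ
        have hnn : 0 ≤ ∑' η : Fin d → ℤ, ‖Dop i φ η‖ ^ 2 := tsum_nonneg fun _ => sq_nonneg _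
        calc (‖φ ζ‖ ^ 2) ^ 2 ≤ (Real.sqrt (∑' η : Fin d → ℤ, ‖Dop i φ η‖ ^ 2) * l2 φ) ^ 2 :=
              pow_le_pow_left₀ (sq_nonneg _) hp 2
          _ = (∑' η : Fin d → ℤ, ‖Dop i φ η‖ ^ 2) * l2 φ ^ 2 := by
              rw [mul_pow, Real.sq_sqrt hnn]
      have hsum : (d:ℝ) * (‖φ ζ‖ ^ 2) ^ 2
          ≤ (∑ i : Fin d, ∑' η : Fin d → ℤ, ‖Dop i φ η‖ ^ 2) * l2 φ ^ 2 := by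
        have := Finset.sum_le_sum (fun i (_ : i ∈ Finset.univ) => hsq i)
        simpa [Finset.sum_const, Finset.card_univ, nsmul_eq_mul, ← Finset.sum_mul] using this
      have hgr : gradn φ ^ 2 = ∑ i : Fin d, ∑' η : Fin d → ℤ, ‖Dop i φ η‖ ^ 2 := by
        unfold gradn
        exact Real.sq_sqrt (Finset.sum_nonneg fun i _ => tsum_nonneg fun _ => sq_nonneg _)
      rw [le_div_iff₀ hdpos, hgr]
      calc ‖φ ζ‖ ^ 4 * d = d * (‖φ ζ‖ ^ 2) ^ 2 := by ring
        _ ≤ _ := hsum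
    have hx : ‖φ ζ‖ = (‖φ ζ‖ ^ 4) ^ ((1:ℝ)/4) := by
      rw [← Real.rpow_natCast ‖φ ζ‖ 4, ← Real.rpow_mul (norm_nonneg _)]
      norm_num
    rw [hx]
    have hrw : (gradn φ ^ 2 * l2 φ ^ 2 / (d:ℝ)) ^ ((1:ℝ)/4)
        = ((1:ℝ)/d) ^ ((1:ℝ)/4) * gradn φ ^ ((1:ℝ)/2) * l2 φ ^ ((1:ℝ)/2) := by
      rw [div_eq_mul_one_div]
      rw [Real.mul_rpow (by positivity) (by positivity),
        Real.mul_rpow (by positivity) (by positivity)]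
      rw [← Real.rpow_natCast (gradn φ) 2, ← Real.rpow_natCast (l2 φ) 2,
        ← Real.rpow_mul hG0, ← Real.rpow_mul hL0]
      norm_num
      ring
    rw [← hrw]
    exact Real.rpow_le_rpow (by positivity) key4 (by norm_num)
  have hsup : lsup φ ≤ ((1:ℝ)/d) ^ ((1:ℝ)/4) * gradn φ ^ ((1:ℝ)/2) * l2 φ ^ ((1:ℝ)/2) :=
    ciSup_le keyζ
  refine hsup.trans ?_
  exact mul_le_mul_of_nonneg_right
    (mul_le_mul_of_nonneg_right (const_le hd) (Real.rpow_nonneg hG0 _))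
    (Real.rpow_nonneg hL0 _)
end
end
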